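/- For every a > 0 and b ≥ 0, the partial derivative of J with respect to a is given by ∂J/∂a(a,b) = λ·μ_α·e^{−μ_α a}·ψ(a,b)/D(a,b)², where ψ(a,b) = −a·k·(q + q·μ_α·θ(b)) + c·γ(b) + λk·(e^{−μ_α a} − 1)/μ_α. -/

import Mathlib

theorem stmt9 (c α lam q μ k : ℝ)
    (hc : 0 < c) (hα0 : 0 < α) (hα1 : α ≤ 1)
    (hlam : 0 < lam) (hq : 0 < q) (hμ : 0 < μ) (hk : 1 ≤ k)
    (Δ Φ ρ : ℝ)
    (hΔ : Δ = (c*μ - α*lam - α*q)^2 + 4*α*c*μ*q)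
    (hΦ : Φ = (-(c*μ - α*lam - α*q) + Real.sqrt Δ) / (2*α*c))
    (hρ : ρ = (-(c*μ - α*lam - α*q) - Real.sqrt Δ) / (2*α*c))
    (hΦpos : 0 < Φ) (hρneg : ρ < 0)
    (γ θf m : ℝ → ℝ) (D J ψ : ℝ → ℝ → ℝ)
    (hγ : ∀ b, γ b = (Φ - ρ)/(Φ*Real.exp (Φ*b) - ρ*Real.exp (ρ*b)))
    (hθf : ∀ b, θf b = (Real.exp (Φ*b) - Real.exp (ρ*b))/(Φ*Real.exp (Φ*b) - ρ*Real.exp (ρ*b)))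
    (hm : ∀ a, m a = (1 - Real.exp (-(μ/α)*a)*((μ/α)*a + 1))/(μ/α))
    (hD : ∀ a b, D a b = q + (μ/α)*q*θf b + lam*Real.exp (-(μ/α)*a))
    (hJ : ∀ a b, J a b = (c*γ b - lam*k*m a)/(D a b))
    (hψ : ∀ a b, ψ a b = -(a*k*(q + q*(μ/α)*θf b)) + c*γ b + lam*k*(Real.exp (-(μ/α)*a) - 1)/(μ/α)) :
    ∀ a : ℝ, 0 < a → ∀ b : ℝ, 0 ≤ b →
      deriv (fun a' => J a' b) a
        = lam * (μ/α) * Real.exp (-(μ/α)*a) * ψ a b / (D a b)^2 := by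
  intro a ha b hb
  set u := μ/α with hu
  have hu0 : 0 < u := div_pos hμ hα0
  have hden : 0 < Φ*Real.exp (Φ*b) - ρ*Real.exp (ρ*b) := by
    have h1 : 0 < Φ*Real.exp (Φ*b) := mul_pos hΦpos (Real.exp_pos _)
    have h2 : ρ*Real.exp (ρ*b) < 0 := mul_neg_of_neg_of_pos hρneg (Real.exp_pos _)
    linarith
  have hθ : 0 ≤ θf b := by
    rw [hθf]
    apply div_nonneg _ hden.le
    have : Real.exp (ρ*b) ≤ Real.exp (Φ*b) := Real.exp_le_exp.mpr (by nlinarith)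
    linarith
  have hDpos : 0 < q + u*q*θf b + lam*Real.exp (-u*a) := by
    have h1 : 0 < lam*Real.exp (-u*a) := mul_pos hlam (Real.exp_pos _)
    have h2 : 0 ≤ u*q*θf b := mul_nonneg (mul_nonneg hu0.le hq.le) hθ
    linarith
  have hDne : q + u*q*θf b + lam*Real.exp (-u*a) ≠ 0 := ne_of_gt hDpos
  have hfun : (fun a' => J a' b)
      = fun a' => (c*γ b - lam*k*((1 - Real.exp (-u*a')*(u*a'+1))/u))
          /(q + u*q*θf b + lam*Real.exp (-u*a')) := by
    funext a'
    rw [hJ, hD, hm]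
  have hexp : HasDerivAt (fun a' : ℝ => Real.exp (-u*a')) (Real.exp (-u*a) * (-u)) a := by
    have := ((hasDerivAt_id a).const_mul (-u)).exp
    simpa using this
  have hlin : HasDerivAt (fun a' : ℝ => u*a'+1) u a := by
    have := ((hasDerivAt_id a).const_mul u).add_const 1
    simpa using this
  have hN := ((((hexp.mul hlin).const_sub 1).div_const u).const_mul (lam*k)).const_sub (c*γ b)
  have hDen : HasDerivAt
      (fun a' => q + u*q*θf b + lam*Real.exp (-u*a'))
      (lam*(Real.exp (-u*a) * (-u))) a := by
    have := (hexp.const_mul lam).const_add (q + u*q*θf b)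
    simpa using this
  have htot := hN.div hDen hDne
  simp only [Pi.mul_def, Pi.div_def] at htot
  rw [hfun, htot.deriv, hψ, hD]
  have hE : Real.exp (-u*a) > 0 := Real.exp_pos _
  field_simp
  ring
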